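/- Fix A₀ ∈ ℝ^{m×n} with rank ≥ r, tolerance τ > 0, perturbations E₂,…,E_k with ε̄ = max_{2≤j≤k}‖E_j‖₂ > 0, and suppose k ≤ (τ·σ_r(A₀) / (2‖A₀‖₂·ε̄ + ε̄²))². Then the perturbed concatenation M̃ = [A₀, A₀+E₂, …, A₀+E_k] satisfies |σ_i(M̃) − √k·σ_i(A₀)| ≤ τ for all i = 1,…,r. -/

import Mathlib

open Matrix Finset
open scoped RealInnerProductSpace

/-- Spectral (ℓ²-operator) norm of a matrix. -/
noncomputable def specNorm {m n : Type*} [Fintype m] [Fintype n] [DecidableEq n]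
    (A : Matrix m n ℝ) : ℝ :=
  ‖LinearMap.toContinuousLinearMap (Matrix.toEuclideanLin A)‖

/-- Eigenvalues of a real symmetric matrix, in nonincreasing order (0-based);
returns 0 if the matrix is not Hermitian. -/
noncomputable def eigDesc {n : ℕ} (A : Matrix (Fin n) (Fin n) ℝ) : Fin n → ℝ :=
  if hA : A.IsHermitian then
    fun i => hA.eigenvalues (Tuple.sort hA.eigenvalues i.rev)
  else fun _ => 0

/-- The `i`-th largest singular value (0-based), defined as the square root of the
`i`-th largest eigenvalue of `Aᵀ * A`; zero for out-of-range indices. -/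
noncomputable def sval {m n : ℕ} (A : Matrix (Fin m) (Fin n) ℝ) (i : ℕ) : ℝ :=
  if h : i < n then Real.sqrt (eigDesc (Aᵀ * A) ⟨i, h⟩) else 0

/-- Horizontal concatenation of `k` matrices of size `m × n`. -/
noncomputable def hconcat {m n k : ℕ} (A : Fin k → Matrix (Fin m) (Fin n) ℝ) :
    Matrix (Fin m) (Fin (k * n)) ℝ :=
  Matrix.of fun i j => A (finProdFinEquiv.symm j).1 i (finProdFinEquiv.symm j).2

/-! ### Bridges between plain vectors and Euclidean space -/

section Bridges

variable {N M : ℕ}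

/-- plain vector as Euclidean vector -/
noncomputable def toE {N : ℕ} (v : Fin N → ℝ) : EuclideanSpace ℝ (Fin N) :=
  (WithLp.linearEquiv 2 ℝ (Fin N → ℝ)).symm v

lemma toE_apply (v : Fin N → ℝ) (i : Fin N) : toE v i = v i := rfl

lemma toE_eq_self (y : EuclideanSpace ℝ (Fin N)) : toE y = y := rfl

lemma toE_add (u v : Fin N → ℝ) : toE (u + v) = toE u + toE v :=
  map_add (WithLp.linearEquiv 2 ℝ (Fin N → ℝ)).symm u v

lemma toE_sum {ι : Type*} (s : Finset ι) (f : ι → (Fin N → ℝ)) :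
    toE (∑ j ∈ s, f j) = ∑ j ∈ s, toE (f j) :=
  map_sum (WithLp.linearEquiv 2 ℝ (Fin N → ℝ)).symm f s

lemma toE_smul (c : ℝ) (v : Fin N → ℝ) : toE (c • v) = c • toE v :=
  map_smul (WithLp.linearEquiv 2 ℝ (Fin N → ℝ)).symm c v

lemma toE_inj {u v : Fin N → ℝ} (h : toE u = toE v) : u = v :=
  (WithLp.linearEquiv 2 ℝ (Fin N → ℝ)).symm.injective h

lemma norm_toE_sq (v : Fin N → ℝ) : ‖toE v‖ ^ 2 = v ⬝ᵥ v := by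
  rw [← real_inner_self_eq_norm_sq]
  simp [toE, PiLp.inner_apply, dotProduct]
  rw [EuclideanSpace.norm_eq, Real.sq_sqrt (by positivity)]; simp [sq]

lemma norm_mulVec_le (A : Matrix (Fin M) (Fin N) ℝ) (v : Fin N → ℝ) :
    ‖toE (A *ᵥ v)‖ ≤ specNorm A * ‖toE v‖ := by
  have h := (LinearMap.toContinuousLinearMap (Matrix.toEuclideanLin A)).le_opNorm (toE v)
  simpa [specNorm, Matrix.toEuclideanLin_apply, toE] using h

lemma specNorm_nonneg (A : Matrix (Fin M) (Fin N) ℝ) : 0 ≤ specNorm A := norm_nonneg _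

lemma specNorm_zero : specNorm (0 : Matrix (Fin M) (Fin N) ℝ) = 0 := by
  simp [specNorm]

/-- quadratic form -/
noncomputable def qf {N : ℕ} (A : Matrix (Fin N) (Fin N) ℝ) (x : Fin N → ℝ) : ℝ :=
  x ⬝ᵥ (A *ᵥ x)

lemma qf_gram (C : Matrix (Fin M) (Fin N) ℝ) (x : Fin N → ℝ) :
    qf (Cᵀ * C) x = (C *ᵥ x) ⬝ᵥ (C *ᵥ x) := by
  rw [qf, ← Matrix.mulVec_mulVec, Matrix.dotProduct_mulVec, Matrix.vecMul_transpose]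

lemma herm_tmul (C : Matrix (Fin M) (Fin N) ℝ) : (Cᵀ * C).IsHermitian := by
  have h := Matrix.isHermitian_conjTranspose_mul_self C
  rwa [Matrix.conjTranspose_eq_transpose_of_trivial] at h

lemma psd_tmul (C : Matrix (Fin M) (Fin N) ℝ) : (Cᵀ * C).PosSemidef := by
  have h := Matrix.posSemidef_conjTranspose_mul_self C
  rwa [Matrix.conjTranspose_eq_transpose_of_trivial] at h

end Bridges

/-! ### Eigenvalues in descending order -/

section Eig
variable {N : ℕ} {A : Matrix (Fin N) (Fin N) ℝ}

lemma eigDesc_eq (hA : A.IsHermitian) (i : Fin N) :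
    eigDesc A i = hA.eigenvalues (Tuple.sort hA.eigenvalues i.rev) := by
  rw [eigDesc, dif_pos hA]

lemma eigDesc_anti (hA : A.IsHermitian) {i j : Fin N} (h : i ≤ j) :
    eigDesc A j ≤ eigDesc A i := by
  rw [eigDesc_eq hA, eigDesc_eq hA]
  exact Tuple.monotone_sort hA.eigenvalues (Fin.rev_le_rev.mpr h)

lemma eigDesc_nonneg (hP : A.PosSemidef) (i : Fin N) : 0 ≤ eigDesc A i := by
  rw [eigDesc_eq hP.1]; exact hP.eigenvalues_nonneg _

lemma hvec (hA : A.IsHermitian) (j : Fin N) :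
    Matrix.toEuclideanLin A (hA.eigenvectorBasis j) =
      hA.eigenvalues j • hA.eigenvectorBasis j := by
  ext i
  have := congrFun (hA.mulVec_eigenvectorBasis j) i
  simpa [Matrix.toEuclideanLin_apply] using this

lemma qf_inner (x : EuclideanSpace ℝ (Fin N)) :
    qf A x = ⟪x, Matrix.toEuclideanLin A x⟫ := by
  simp only [qf, PiLp.inner_apply, Matrix.toEuclideanLin_apply, dotProduct, RCLike.inner_apply,
    conj_trivial]
  exact Finset.sum_congr rfl fun _ _ => mul_comm _ _

lemma qf_eq_sum (hA : A.IsHermitian) (x : EuclideanSpace ℝ (Fin N)) :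
    qf A x = ∑ j, hA.eigenvalues j * (hA.eigenvectorBasis.repr x j)^2 := by
  have key : Matrix.toEuclideanLin A x =
      ∑ j, (hA.eigenvalues j * hA.eigenvectorBasis.repr x j) • hA.eigenvectorBasis j := by
    conv_lhs => rw [← hA.eigenvectorBasis.sum_repr x]
    rw [map_sum]
    refine Finset.sum_congr rfl fun j _ => ?_
    rw [_root_.map_smul, hvec hA j, smul_smul, mul_comm]
  rw [qf_inner, key, inner_sum]
  refine Finset.sum_congr rfl fun j _ => ?_
  rw [real_inner_smul_right, real_inner_comm, ← OrthonormalBasis.repr_apply_apply]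
  ring

lemma euc_norm_sq (u : EuclideanSpace ℝ (Fin N)) : ‖u‖^2 = ∑ i, (u i)^2 := by
  rw [EuclideanSpace.norm_eq, Real.sq_sqrt (by positivity)]
  simp [sq]

lemma norm_sq_eq_sum_repr (hA : A.IsHermitian) (x : EuclideanSpace ℝ (Fin N)) :
    ‖x‖^2 = ∑ j, (hA.eigenvectorBasis.repr x j)^2 := by
  rw [← hA.eigenvectorBasis.repr.norm_map x, euc_norm_sq]

end Eig

/-! ### Courant–Fischer type bounds -/

section CF
variable {N : ℕ} {A : Matrix (Fin N) (Fin N) ℝ}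

lemma repr_zero_of_mem_span (hA : A.IsHermitian) (T : Finset (Fin N))
    {x : EuclideanSpace ℝ (Fin N)}
    (hx : x ∈ Submodule.span ℝ (hA.eigenvectorBasis '' ↑T)) {j : Fin N} (hj : j ∉ T) :
    hA.eigenvectorBasis.repr x j = 0 := by
  induction hx using Submodule.span_induction with
  | mem y hy =>
      obtain ⟨t, ht, rfl⟩ := hy
      rw [OrthonormalBasis.repr_self, EuclideanSpace.single_apply]
      simp only [ite_eq_right_iff]
      rintro rfl; exact absurd ht hj
  | zero => simp
  | add y z _ _ hy hz => simp [hy, hz]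
  | smul c y _ hy => simp [hy]

lemma finrank_span_basis_image (hA : A.IsHermitian) (T : Finset (Fin N)) :
    Module.finrank ℝ ↥(Submodule.span ℝ (hA.eigenvectorBasis '' ↑T)) = T.card := by
  have hli : LinearIndependent ℝ (fun t : {x // x ∈ T} => hA.eigenvectorBasis ↑t) :=
    (hA.eigenvectorBasis.orthonormal.comp _ Subtype.val_injective).linearIndependent
  have hrange : Set.range (fun t : {x // x ∈ T} => hA.eigenvectorBasis ↑t)
      = hA.eigenvectorBasis '' ↑T := by
    rw [show (fun t : {x // x ∈ T} => hA.eigenvectorBasis ↑t)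
        = hA.eigenvectorBasis ∘ Subtype.val from rfl, Set.range_comp, Subtype.range_coe]
  rw [← hrange, finrank_span_eq_card hli, Fintype.card_coe]

lemma cf_lower (hA : A.IsHermitian) (i : Fin N) :
    ∃ S : Submodule ℝ (EuclideanSpace ℝ (Fin N)), Module.finrank ℝ ↥S = i + 1 ∧
      ∀ x ∈ S, eigDesc A i * ‖x‖^2 ≤ qf A x := by
  classical
  set σ := Tuple.sort hA.eigenvalues with hσ
  refine ⟨Submodule.span ℝ (hA.eigenvectorBasis '' ↑((Finset.Ici i.rev).image σ)), ?_, ?_⟩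
  · rw [finrank_span_basis_image, Finset.card_image_of_injective _ σ.injective, Fin.card_Ici]
    have := i.isLt
    rw [Fin.val_rev]; omega
  · intro x hx
    rw [qf_eq_sum hA, norm_sq_eq_sum_repr hA, Finset.mul_sum]
    refine Finset.sum_le_sum fun j _ => ?_
    by_cases hj : j ∈ (Finset.Ici i.rev).image σ
    · obtain ⟨t, ht, rfl⟩ := Finset.mem_image.mp hj
      have h1 : eigDesc A i ≤ hA.eigenvalues (σ t) := by
        rw [eigDesc_eq hA]
        exact Tuple.monotone_sort hA.eigenvalues (Finset.mem_Ici.mp ht)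
      exact mul_le_mul_of_nonneg_right h1 (sq_nonneg _)
    · rw [repr_zero_of_mem_span hA _ hx hj]; simp

lemma cf_upper (hA : A.IsHermitian) (i : Fin N) (S : Submodule ℝ (EuclideanSpace ℝ (Fin N)))
    (hS : Module.finrank ℝ ↥S = i + 1) :
    ∃ x ∈ S, x ≠ 0 ∧ qf A x ≤ eigDesc A i * ‖x‖^2 := by
  classical
  set σ := Tuple.sort hA.eigenvalues with hσ
  set B := Submodule.span ℝ (hA.eigenvectorBasis '' ↑((Finset.Iic i.rev).image σ)) with hBdef
  have hB : Module.finrank ℝ ↥B = N - i := by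
    rw [hBdef, finrank_span_basis_image, Finset.card_image_of_injective _ σ.injective,
      Fin.card_Iic]
    have := i.isLt
    rw [Fin.val_rev]; omega
  have hdim : 0 < Module.finrank ℝ ↥(S ⊓ B) := by
    have h1 := Submodule.finrank_sup_add_finrank_inf_eq S B
    have h2 : Module.finrank ℝ ↥(S ⊔ B) ≤ N := by
      refine le_trans (Submodule.finrank_le _) ?_
      simp [finrank_euclideanSpace]
    have hi := i.isLt
    omega
  obtain ⟨⟨x, hxSB⟩, hne⟩ := Module.finrank_pos_iff_exists_ne_zero.mp hdim
  have hx0 : x ≠ 0 := fun h => hne (Subtype.ext h)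
  refine ⟨x, hxSB.1, hx0, ?_⟩
  rw [qf_eq_sum hA, norm_sq_eq_sum_repr hA, Finset.mul_sum]
  refine Finset.sum_le_sum fun j _ => ?_
  by_cases hj : j ∈ (Finset.Iic i.rev).image σ
  · obtain ⟨t, ht, rfl⟩ := Finset.mem_image.mp hj
    have h1 : hA.eigenvalues (σ t) ≤ eigDesc A i := by
      rw [eigDesc_eq hA]
      exact Tuple.monotone_sort hA.eigenvalues (Finset.mem_Iic.mp ht)
    exact mul_le_mul_of_nonneg_right h1 (sq_nonneg _)
  · rw [repr_zero_of_mem_span hA _ hxSB.2 hj]; simp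

end CF

/-! ### Blocks -/

section Blocks
variable {m n k : ℕ}

def blk (y : Fin (k*n) → ℝ) (j : Fin k) : Fin n → ℝ := fun l => y (finProdFinEquiv (j, l))

lemma sum_kn (f : Fin (k*n) → ℝ) :
    ∑ p, f p = ∑ j : Fin k, ∑ l : Fin n, f (finProdFinEquiv (j, l)) := by
  calc ∑ p, f p = ∑ q : Fin k × Fin n, f (finProdFinEquiv q) :=
        (Fintype.sum_equiv finProdFinEquiv _ _ fun q => rfl).symm
    _ = _ := Fintype.sum_prod_type _

lemma hconcat_mulVec (A : Fin k → Matrix (Fin m) (Fin n) ℝ) (y : Fin (k*n) → ℝ) :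
    (hconcat A) *ᵥ y = ∑ j, (A j) *ᵥ (blk y j) := by
  funext i
  rw [Finset.sum_apply]
  show ∑ p, hconcat A i p * y p = _
  rw [sum_kn (fun p => hconcat A i p * y p)]
  refine Finset.sum_congr rfl fun j _ => ?_
  show _ = ∑ l, A j i l * blk y j l
  refine Finset.sum_congr rfl fun l _ => ?_
  simp only [hconcat, blk, Matrix.of_apply, Equiv.symm_apply_apply]

lemma dot_split (y z : Fin (k*n) → ℝ) :
    y ⬝ᵥ z = ∑ j, blk y j ⬝ᵥ blk z j := by
  show ∑ p, y p * z p = _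
  rw [sum_kn (fun p => y p * z p)]
  rfl

noncomputable def sumBlocks (k n : ℕ) :
    EuclideanSpace ℝ (Fin (k*n)) →ₗ[ℝ] EuclideanSpace ℝ (Fin n) where
  toFun y := toE fun l => ∑ j : Fin k, y (finProdFinEquiv (j, l))
  map_add' y z := by
    apply PiLp.ext; intro l
    simp [toE, Finset.sum_add_distrib, PiLp.add_apply]
  map_smul' c y := by
    apply PiLp.ext; intro l
    simp [toE, Finset.mul_sum, PiLp.smul_apply]

noncomputable def repBlocks (k n : ℕ) :
    EuclideanSpace ℝ (Fin n) →ₗ[ℝ] EuclideanSpace ℝ (Fin (k*n)) where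
  toFun x := toE fun p => x (finProdFinEquiv.symm p).2
  map_add' y z := by apply PiLp.ext; intro p; simp [toE, PiLp.add_apply]
  map_smul' c y := by apply PiLp.ext; intro p; simp [toE, PiLp.smul_apply]

lemma sumBlocks_eq (y : EuclideanSpace ℝ (Fin (k*n))) :
    sumBlocks k n y = toE (∑ j, blk y j) := by
  show toE (fun l => ∑ j : Fin k, y (finProdFinEquiv (j, l))) = _
  refine congrArg toE (funext fun l => ?_)
  rw [Finset.sum_apply]
  rfl

lemma blk_repBlocks (x : Fin n → ℝ) (j : Fin k) :
    blk (repBlocks k n (toE x)) j = x := by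
  funext l
  simp only [blk, repBlocks, toE, LinearMap.coe_mk, AddHom.coe_mk]
  show x (finProdFinEquiv.symm (finProdFinEquiv (j, l))).2 = x l
  rw [Equiv.symm_apply_apply]

lemma finrank_map_eq' {N M : ℕ} (f : EuclideanSpace ℝ (Fin N) →ₗ[ℝ] EuclideanSpace ℝ (Fin M))
    (S : Submodule ℝ (EuclideanSpace ℝ (Fin N))) (h : ∀ x ∈ S, f x = 0 → x = 0) :
    Module.finrank ℝ ↥(S.map f) = Module.finrank ℝ ↥S := by
  have hinj : Function.Injective (f.comp S.subtype) := by
    intro a b hab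
    have h1 : f ((a : EuclideanSpace ℝ (Fin N)) - b) = 0 := by
      rw [map_sub]
      simpa using sub_eq_zero_of_eq hab
    have h2 := h _ (S.sub_mem a.2 b.2) h1
    exact Subtype.ext (sub_eq_zero.mp h2)
  rw [← LinearMap.finrank_range_of_inj hinj, LinearMap.range_comp, Submodule.range_subtype]

lemma norm_blk_split (y : Fin (k*n) → ℝ) : ‖toE y‖^2 = ∑ j, ‖toE (blk y j)‖^2 := by
  rw [norm_toE_sq, dot_split]
  exact Finset.sum_congr rfl fun j _ => (norm_toE_sq _).symm

lemma sum_blk_norm (y : Fin (k*n) → ℝ) :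
    ∑ j, ‖toE (blk y j)‖ ≤ Real.sqrt k * ‖toE y‖ := by
  have h1 : (∑ j, ‖toE (blk y j)‖)^2 ≤ (k : ℝ) * ∑ j, ‖toE (blk y j)‖^2 := by
    simpa using sq_sum_le_card_mul_sum_sq (s := (univ : Finset (Fin k)))
      (f := fun j => ‖toE (blk y j)‖)
  have ha : (0:ℝ) ≤ ∑ j, ‖toE (blk y j)‖ := Finset.sum_nonneg fun _ _ => norm_nonneg _
  calc ∑ j, ‖toE (blk y j)‖ = Real.sqrt ((∑ j, ‖toE (blk y j)‖)^2) := (Real.sqrt_sq ha).symm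
    _ ≤ Real.sqrt ((k:ℝ) * ‖toE y‖^2) := Real.sqrt_le_sqrt (by rw [norm_blk_split y]; exact h1)
    _ = Real.sqrt k * ‖toE y‖ := by
        rw [Real.sqrt_mul (Nat.cast_nonneg k), Real.sqrt_sq (norm_nonneg _)]

lemma qf_concat (A₀ : Matrix (Fin m) (Fin n) ℝ) (E : Fin k → Matrix (Fin m) (Fin n) ℝ)
    (y : Fin (k*n) → ℝ) :
    qf ((hconcat fun j => A₀ + E j)ᵀ * (hconcat fun j => A₀ + E j)) y
      = ‖toE (A₀ *ᵥ (∑ j, blk y j)) + toE (∑ j, (E j) *ᵥ blk y j)‖^2 := by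
  rw [qf_gram, hconcat_mulVec, ← norm_toE_sq]
  have hsplit : (∑ j, (A₀ + E j) *ᵥ blk y j)
      = (A₀ *ᵥ (∑ j, blk y j)) + ∑ j, (E j) *ᵥ blk y j := by
    have hA : A₀ *ᵥ (∑ j, blk y j) = ∑ j, A₀ *ᵥ blk y j := by
      rw [← Matrix.mulVecLin_apply, map_sum]
      simp [Matrix.mulVecLin_apply]
    rw [hA, ← Finset.sum_add_distrib]
    exact Finset.sum_congr rfl fun j _ => Matrix.add_mulVec _ _ _
  rw [hsplit, toE_add]

lemma norm_err_le (E : Fin k → Matrix (Fin m) (Fin n) ℝ) {ebar : ℝ} (hebar : 0 ≤ ebar)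
    (hE : ∀ j (x : Fin n → ℝ), ‖toE ((E j) *ᵥ x)‖ ≤ ebar * ‖toE x‖)
    (y : Fin (k*n) → ℝ) :
    ‖toE (∑ j, (E j) *ᵥ blk y j)‖ ≤ ebar * (Real.sqrt k * ‖toE y‖) := by
  calc ‖toE (∑ j, (E j) *ᵥ blk y j)‖ = ‖∑ j, toE ((E j) *ᵥ blk y j)‖ := by rw [toE_sum]
    _ ≤ ∑ j, ‖toE ((E j) *ᵥ blk y j)‖ := norm_sum_le _ _
    _ ≤ ∑ j, ebar * ‖toE (blk y j)‖ := Finset.sum_le_sum fun j _ => hE j _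
    _ = ebar * ∑ j, ‖toE (blk y j)‖ := by rw [Finset.mul_sum]
    _ ≤ ebar * (Real.sqrt k * ‖toE y‖) :=
        mul_le_mul_of_nonneg_left (sum_blk_norm y) hebar

lemma norm_sumblk_le (y : Fin (k*n) → ℝ) :
    ‖toE (∑ j, blk y j)‖ ≤ Real.sqrt k * ‖toE y‖ := by
  calc ‖toE (∑ j, blk y j)‖ = ‖∑ j, toE (blk y j)‖ := by rw [toE_sum]
    _ ≤ ∑ j, ‖toE (blk y j)‖ := norm_sum_le _ _
    _ ≤ Real.sqrt k * ‖toE y‖ := sum_blk_norm y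

end Blocks

/-! ### Main eigenvalue bounds -/

section Main
variable {m n k : ℕ}

lemma eig_up (A₀ : Matrix (Fin m) (Fin n) ℝ)
    (E : Fin k → Matrix (Fin m) (Fin n) ℝ) {ebar : ℝ} (hebar : 0 ≤ ebar)
    (hE : ∀ j (x : Fin n → ℝ), ‖toE ((E j) *ᵥ x)‖ ≤ ebar * ‖toE x‖)
    {i : ℕ} (hin : i < n) (hiN : i < k*n) :
    eigDesc ((hconcat fun j => A₀ + E j)ᵀ * (hconcat fun j => A₀ + E j)) ⟨i,hiN⟩
      ≤ (k:ℝ) * eigDesc (A₀ᵀ*A₀) ⟨i,hin⟩ + (k:ℝ)*(2*specNorm A₀*ebar + ebar^2) := by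
  classical
  have hW : ((hconcat fun j => A₀ + E j)ᵀ * (hconcat fun j => A₀ + E j)).IsHermitian :=
    herm_tmul _
  have hG : (A₀ᵀ*A₀).IsHermitian := herm_tmul A₀
  have hg0 : 0 ≤ eigDesc (A₀ᵀ*A₀) ⟨i,hin⟩ := eigDesc_nonneg (psd_tmul A₀) _
  set g := eigDesc (A₀ᵀ*A₀) ⟨i,hin⟩ with hgdef
  set a := eigDesc ((hconcat fun j => A₀ + E j)ᵀ * (hconcat fun j => A₀ + E j)) ⟨i,hiN⟩
    with hadef
  obtain ⟨S, hSd, hSlow⟩ := cf_lower hW ⟨i,hiN⟩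
  have hsq : (Real.sqrt k)^2 = (k:ℝ) := Real.sq_sqrt (Nat.cast_nonneg k)
  by_cases hc : ∀ y ∈ S, sumBlocks k n y = 0 → y = 0
  · obtain ⟨x, hxS', hx0, hxq⟩ := cf_upper hG ⟨i,hin⟩ (S.map (sumBlocks k n))
      (by rw [finrank_map_eq' _ _ hc, hSd])
    obtain ⟨y, hyS, hyx⟩ := Submodule.mem_map.mp hxS'
    have hy0 : y ≠ 0 := by rintro rfl; exact hx0 (by rw [← hyx]; exact map_zero _)
    have hxy : x = toE (∑ j, blk y j) := by rw [← hyx, sumBlocks_eq]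
    have hyq := hSlow y hyS
    have hqf := qf_concat A₀ E y
    set u := toE (A₀ *ᵥ (∑ j, blk (y : Fin (k*n) → ℝ) j)) with hu
    set w := toE (∑ j, (E j) *ᵥ blk (y : Fin (k*n) → ℝ) j) with hw
    have hnx : ‖x‖ ≤ Real.sqrt k * ‖y‖ := by
      rw [hxy]
      exact norm_sumblk_le y
    have hux : ‖u‖ ≤ specNorm A₀ * ‖x‖ := by
      rw [hxy]
      exact norm_mulVec_le A₀ _
    have huq : ‖u‖^2 ≤ g * ‖x‖^2 := by
      have h1 : ‖u‖^2 = qf (A₀ᵀ*A₀) x := by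
        rw [hu, norm_toE_sq, qf_gram, hxy]
        rfl
      rw [h1]
      exact hxq
    have hw' : ‖w‖ ≤ ebar * (Real.sqrt k * ‖y‖) := norm_err_le E hebar hE y
    have hy2 : (0:ℝ) < ‖y‖^2 := pow_pos (norm_pos_iff.mpr hy0) 2
    have h2 := norm_add_sq_real u w
    have h3 := real_inner_le_norm u w
    have hx2 : ‖x‖^2 ≤ (k:ℝ) * ‖y‖^2 := by
      have := pow_le_pow_left₀ (norm_nonneg x) hnx 2
      calc ‖x‖^2 ≤ (Real.sqrt k * ‖y‖)^2 := this
        _ = (k:ℝ) * ‖y‖^2 := by rw [mul_pow, hsq]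
    have hw2 : ‖w‖^2 ≤ ebar^2 * ((k:ℝ) * ‖y‖^2) := by
      have := pow_le_pow_left₀ (norm_nonneg w) hw' 2
      calc ‖w‖^2 ≤ (ebar * (Real.sqrt k * ‖y‖))^2 := this
        _ = ebar^2 * ((k:ℝ) * ‖y‖^2) := by rw [mul_pow, mul_pow, hsq]
    have huw : ‖u‖ * ‖w‖ ≤ specNorm A₀ * (Real.sqrt k * ‖y‖) * (ebar * (Real.sqrt k * ‖y‖)) := by
      refine mul_le_mul ?_ hw' (norm_nonneg w)
        (mul_nonneg (specNorm_nonneg A₀) (by positivity))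
      exact hux.trans (mul_le_mul_of_nonneg_left hnx (specNorm_nonneg A₀))
    have hGq : g * ‖x‖^2 ≤ g * ((k:ℝ) * ‖y‖^2) := mul_le_mul_of_nonneg_left hx2 hg0
    have key : a * ‖y‖^2 ≤ ((k:ℝ)*g + (k:ℝ)*(2*specNorm A₀*ebar + ebar^2)) * ‖y‖^2 := by
      have hqfy : a * ‖y‖^2 ≤ ‖u + w‖^2 := by
        rw [← hqf]; exact hyq
      have hkk : Real.sqrt k * ‖y‖ * (Real.sqrt k * ‖y‖) = (k:ℝ) * ‖y‖^2 := by
        rw [show Real.sqrt k * ‖y‖ * (Real.sqrt k * ‖y‖) = (Real.sqrt k)^2 * ‖y‖^2 by ring,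
          hsq]
      have hnorm : specNorm A₀ * (Real.sqrt k * ‖y‖) * (ebar * (Real.sqrt k * ‖y‖))
          = specNorm A₀ * ebar * ((k:ℝ) * ‖y‖^2) := by
        linear_combination (specNorm A₀ * ebar) * hkk
      have huw' : ‖u‖ * ‖w‖ ≤ specNorm A₀ * ebar * ((k:ℝ) * ‖y‖^2) := huw.trans_eq hnorm
      linarith [hqfy, h2, h3, huq, hGq, huw', hw2]
    exact (mul_le_mul_iff_of_pos_right hy2).mp key
  · push_neg at hc
    obtain ⟨y, hyS, hs0, hy0⟩ := hc
    have hv0 : (∑ j, blk (y : Fin (k*n) → ℝ) j) = 0 := by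
      apply toE_inj
      rw [← sumBlocks_eq, hs0]
      rfl
    have hqf := qf_concat A₀ E y
    rw [hv0, Matrix.mulVec_zero] at hqf
    have hzero : toE (0 : Fin m → ℝ) = 0 := rfl
    rw [hzero, zero_add] at hqf
    have hyq := hSlow y hyS
    have hw' : ‖toE (∑ j, (E j) *ᵥ blk (y : Fin (k*n) → ℝ) j)‖ ≤ ebar * (Real.sqrt k * ‖y‖) :=
      norm_err_le E hebar hE y
    have hy2 : (0:ℝ) < ‖y‖^2 := pow_pos (norm_pos_iff.mpr hy0) 2
    have hw2 : ‖toE (∑ j, (E j) *ᵥ blk (y : Fin (k*n) → ℝ) j)‖^2 ≤ ebar^2 * ((k:ℝ) * ‖y‖^2) := by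
      have := pow_le_pow_left₀ (norm_nonneg _) hw' 2
      calc _ ≤ (ebar * (Real.sqrt k * ‖y‖))^2 := this
        _ = ebar^2 * ((k:ℝ) * ‖y‖^2) := by rw [mul_pow, mul_pow, hsq]
    have t1 : (0:ℝ) ≤ (k:ℝ) * g * ‖y‖^2 :=
      mul_nonneg (mul_nonneg (Nat.cast_nonneg k) hg0) (sq_nonneg _)
    have t2 : (0:ℝ) ≤ 2 * specNorm A₀ * ebar * ((k:ℝ) * ‖y‖^2) := by
      have := specNorm_nonneg A₀
      positivity
    have key : a * ‖y‖^2 ≤ ((k:ℝ)*g + (k:ℝ)*(2*specNorm A₀*ebar + ebar^2)) * ‖y‖^2 := by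
      have h4 : a * ‖y‖^2 ≤ ebar^2 * ((k:ℝ) * ‖y‖^2) := by
        rw [hqf] at hyq
        linarith [hyq, hw2]
      linarith [h4, t1, t2]
    exact (mul_le_mul_iff_of_pos_right hy2).mp key

lemma eig_low (hk : 0 < k) (A₀ : Matrix (Fin m) (Fin n) ℝ)
    (E : Fin k → Matrix (Fin m) (Fin n) ℝ) {ebar : ℝ} (hebar : 0 ≤ ebar)
    (hE : ∀ j (x : Fin n → ℝ), ‖toE ((E j) *ᵥ x)‖ ≤ ebar * ‖toE x‖)
    {i : ℕ} (hin : i < n) (hiN : i < k*n) :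
    (k:ℝ) * eigDesc (A₀ᵀ*A₀) ⟨i,hin⟩ - (k:ℝ)*(2*specNorm A₀*ebar + ebar^2)
      ≤ eigDesc ((hconcat fun j => A₀ + E j)ᵀ * (hconcat fun j => A₀ + E j)) ⟨i,hiN⟩ := by
  classical
  have hW : ((hconcat fun j => A₀ + E j)ᵀ * (hconcat fun j => A₀ + E j)).IsHermitian :=
    herm_tmul _
  have hG : (A₀ᵀ*A₀).IsHermitian := herm_tmul A₀
  set g := eigDesc (A₀ᵀ*A₀) ⟨i,hin⟩ with hgdef
  set a := eigDesc ((hconcat fun j => A₀ + E j)ᵀ * (hconcat fun j => A₀ + E j)) ⟨i,hiN⟩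
    with hadef
  obtain ⟨S, hSd, hSlow⟩ := cf_lower hG ⟨i,hin⟩
  have hinj : ∀ x ∈ S, repBlocks k n x = 0 → x = 0 := by
    intro x hx h0
    apply PiLp.ext
    intro l
    have h1 : x ((finProdFinEquiv.symm (finProdFinEquiv ((⟨0,hk⟩ : Fin k), l))).2) = 0 :=
      congrArg (fun z : EuclideanSpace ℝ (Fin (k*n)) =>
        z (finProdFinEquiv ((⟨0,hk⟩ : Fin k), l))) h0
    rwa [Equiv.symm_apply_apply] at h1
  obtain ⟨y, hyS', hy0, hyq⟩ := cf_upper hW ⟨i,hiN⟩ (S.map (repBlocks k n))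
    (by rw [finrank_map_eq' _ _ hinj, hSd])
  obtain ⟨x, hxS, hxy⟩ := Submodule.mem_map.mp hyS'
  have hx0 : x ≠ 0 := by rintro rfl; rw [map_zero] at hxy; exact hy0 hxy.symm
  have hblk : ∀ j : Fin k, blk (y : Fin (k*n) → ℝ) j = (x : Fin n → ℝ) := by
    intro j
    rw [← hxy]
    exact blk_repBlocks x j
  have hsumblk : (∑ j : Fin k, blk (y : Fin (k*n) → ℝ) j) = (k:ℝ) • (x : Fin n → ℝ) := by
    rw [Finset.sum_congr rfl fun j _ => hblk j, Finset.sum_const, Finset.card_univ,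
      Fintype.card_fin]
    exact (Nat.cast_smul_eq_nsmul ℝ k (x : Fin n → ℝ)).symm
  have hqf := qf_concat A₀ E y
  rw [hsumblk] at hqf
  have hAx : A₀ *ᵥ ((k:ℝ) • (x : Fin n → ℝ)) = (k:ℝ) • (A₀ *ᵥ x) := Matrix.mulVec_smul _ _ _
  rw [hAx, toE_smul] at hqf
  set u := toE (A₀ *ᵥ (x : Fin n → ℝ)) with hu
  set w := toE (∑ j, (E j) *ᵥ blk (y : Fin (k*n) → ℝ) j) with hw
  have hwx : ‖w‖ ≤ (k:ℝ) * (ebar * ‖x‖) := by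
    calc ‖w‖ = ‖∑ j, toE ((E j) *ᵥ blk (y : Fin (k*n) → ℝ) j)‖ := by rw [hw, toE_sum]
      _ ≤ ∑ j, ‖toE ((E j) *ᵥ blk (y : Fin (k*n) → ℝ) j)‖ := norm_sum_le _ _
      _ ≤ ∑ j : Fin k, ebar * ‖x‖ := by
          refine Finset.sum_le_sum fun j _ => ?_
          rw [hblk j]
          exact hE j x
      _ = (k:ℝ) * (ebar * ‖x‖) := by
          rw [Finset.sum_const, Finset.card_univ, Fintype.card_fin, nsmul_eq_mul]
  have huq : g * ‖x‖^2 ≤ ‖u‖^2 := by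
    have h1 : ‖u‖^2 = qf (A₀ᵀ*A₀) x := by
      rw [hu, norm_toE_sq, qf_gram]
    rw [h1]
    exact hSlow x hxS
  have hux : ‖u‖ ≤ specNorm A₀ * ‖x‖ := norm_mulVec_le A₀ _
  have hy2 : ‖y‖^2 = (k:ℝ) * ‖x‖^2 := by
    have h1 : ‖toE (y : Fin (k*n) → ℝ)‖^2 = ∑ j, ‖toE (blk (y : Fin (k*n) → ℝ) j)‖^2 :=
      norm_blk_split _
    calc ‖y‖^2 = ∑ j, ‖toE (blk (y : Fin (k*n) → ℝ) j)‖^2 := h1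
      _ = ∑ j : Fin k, ‖x‖^2 := Finset.sum_congr rfl fun j _ => by rw [hblk j]; rfl
      _ = (k:ℝ) * ‖x‖^2 := by
          rw [Finset.sum_const, Finset.card_univ, Fintype.card_fin, nsmul_eq_mul]
  have hx2 : (0:ℝ) < ‖x‖^2 := pow_pos (norm_pos_iff.mpr hx0) 2
  have hk' : (0:ℝ) < (k:ℝ) := Nat.cast_pos.mpr hk
  have h2 := norm_add_sq_real ((k:ℝ) • u) w
  have h3 : -(‖(k:ℝ) • u‖ * ‖w‖) ≤ ⟪(k:ℝ) • u, w⟫ := by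
    have := abs_real_inner_le_norm ((k:ℝ) • u) w
    linarith [neg_abs_le ⟪(k:ℝ) • u, w⟫]
  have hnsm : ‖(k:ℝ) • u‖ = (k:ℝ) * ‖u‖ := by
    rw [norm_smul, Real.norm_eq_abs, abs_of_pos hk']
  have hyqa : qf ((hconcat fun j => A₀ + E j)ᵀ * (hconcat fun j => A₀ + E j)) y ≤ a * ‖y‖^2 :=
    hyq
  have key : ((k:ℝ)*g - (k:ℝ)*(2*specNorm A₀*ebar + ebar^2)) * ((k:ℝ) * ‖x‖^2)
      ≤ a * ((k:ℝ) * ‖x‖^2) := by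
    rw [← hy2]
    refine le_trans ?_ hyqa
    rw [hqf, hy2]
    have huw : ‖u‖ * ‖w‖ ≤ (specNorm A₀ * ‖x‖) * ((k:ℝ) * (ebar * ‖x‖)) :=
      mul_le_mul hux hwx (norm_nonneg w)
        (mul_nonneg (specNorm_nonneg A₀) (norm_nonneg x))
    have hnsm2 : ‖(k:ℝ) • u‖^2 = (k:ℝ)^2 * ‖u‖^2 := by rw [hnsm]; ring
    have hk2g : (k:ℝ)^2 * (g * ‖x‖^2) ≤ (k:ℝ)^2 * ‖u‖^2 :=
      mul_le_mul_of_nonneg_left huq (sq_nonneg _)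
    have huw2 : ‖(k:ℝ) • u‖ * ‖w‖ ≤ (k:ℝ)^2 * (specNorm A₀ * ebar * ‖x‖^2) := by
      rw [hnsm, mul_assoc]
      calc (k:ℝ) * (‖u‖ * ‖w‖)
          ≤ (k:ℝ) * ((specNorm A₀ * ‖x‖) * ((k:ℝ) * (ebar * ‖x‖))) :=
            mul_le_mul_of_nonneg_left huw hk'.le
        _ = (k:ℝ)^2 * (specNorm A₀ * ebar * ‖x‖^2) := by ring
    have hnn : (0:ℝ) ≤ (k:ℝ)^2 * (ebar^2 * ‖x‖^2) := by positivity
    nlinarith [h2, h3, hnsm2, hk2g, huw2, hnn, sq_nonneg ‖w‖]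
  have hpos : (0:ℝ) < (k:ℝ) * ‖x‖^2 := by positivity
  exact (mul_le_mul_iff_of_pos_right hpos).mp key

end Main

lemma eigDesc_pos_of_rank {m n : ℕ} (A₀ : Matrix (Fin m) (Fin n) ℝ) {r : ℕ} (hr : 0 < r)
    (hrank : r ≤ A₀.rank) (hrn : r - 1 < n) :
    0 < eigDesc (A₀ᵀ*A₀) ⟨r-1, hrn⟩ := by
  classical
  have hG : (A₀ᵀ*A₀).IsHermitian := herm_tmul A₀
  have hpsd := psd_tmul A₀
  by_contra hle
  push_neg at hle
  have h0 : ∀ t : Fin n, r - 1 ≤ t.val → eigDesc (A₀ᵀ*A₀) t = 0 := by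
    intro t ht
    refine le_antisymm ?_ (eigDesc_nonneg hpsd t)
    exact le_trans (eigDesc_anti hG (show (⟨r-1,hrn⟩ : Fin n) ≤ t from ht)) hle
  set ρ : Equiv.Perm (Fin n) := Fin.revPerm.trans (Tuple.sort hG.eigenvalues) with hρ
  have hρeig : ∀ t : Fin n, eigDesc (A₀ᵀ*A₀) t = hG.eigenvalues (ρ t) := by
    intro t
    rw [eigDesc_eq hG]
    rfl
  have hf : ∀ j : {j : Fin n // hG.eigenvalues j ≠ 0}, ((ρ.symm j.1) : ℕ) < r - 1 := by
    rintro ⟨j, hj⟩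
    by_contra hge
    push_neg at hge
    apply hj
    have := h0 (ρ.symm j) hge
    rwa [hρeig, Equiv.apply_symm_apply] at this
  have hinj : Function.Injective
      (fun j : {j : Fin n // hG.eigenvalues j ≠ 0} => (⟨(ρ.symm j.1 : ℕ), hf j⟩ : Fin (r-1))) := by
    intro a b hab
    simp only [Fin.mk.injEq] at hab
    exact Subtype.ext (ρ.symm.injective (Fin.ext hab))
  have hcard := Fintype.card_le_of_injective _ hinj
  rw [Fintype.card_fin] at hcard
  have hrk := hG.rank_eq_card_non_zero_eigs
  rw [Matrix.rank_transpose_mul_self] at hrk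
  omega

lemma abs_sqrt_sub_sqrt {a b d : ℝ} (ha : 0 ≤ a) (hb : 0 < b) (h : |a - b| ≤ d) :
    |Real.sqrt a - Real.sqrt b| ≤ d / Real.sqrt b := by
  have hsb : 0 < Real.sqrt b := Real.sqrt_pos.mpr hb
  rw [le_div_iff₀ hsb]
  have hprod : (Real.sqrt a - Real.sqrt b) * (Real.sqrt a + Real.sqrt b) = a - b := by
    have h3 := Real.sq_sqrt ha
    have h4 := Real.sq_sqrt hb.le
    ring_nf
    nlinarith [h3, h4]
  have key : |Real.sqrt a - Real.sqrt b| * (Real.sqrt a + Real.sqrt b) = |a - b| := by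
    rw [← abs_of_nonneg (add_nonneg (Real.sqrt_nonneg a) (Real.sqrt_nonneg b)), ← abs_mul,
      hprod]
  calc |Real.sqrt a - Real.sqrt b| * Real.sqrt b
      ≤ |Real.sqrt a - Real.sqrt b| * (Real.sqrt a + Real.sqrt b) :=
        mul_le_mul_of_nonneg_left (by linarith [Real.sqrt_nonneg a]) (abs_nonneg _)
    _ = |a - b| := key
    _ ≤ d := h

theorem stmt14 {m n k : ℕ} (hk : 2 ≤ k) (A₀ : Matrix (Fin m) (Fin n) ℝ)
    (E : Fin k → Matrix (Fin m) (Fin n) ℝ) (hE0 : E ⟨0, by omega⟩ = 0)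
    (r : ℕ) (hr : 0 < r) (hrank : r ≤ A₀.rank) (τ : ℝ) (hτ : 0 < τ)
    (ebar : ℝ) (hebar : 0 < ebar)
    (hub : ∀ j ∈ Finset.univ.erase (⟨0, by omega⟩ : Fin k), specNorm (E j) ≤ ebar)
    (hmem : ∃ j ∈ Finset.univ.erase (⟨0, by omega⟩ : Fin k), specNorm (E j) = ebar)
    (hkmax : (k : ℝ) ≤ (τ * sval A₀ (r - 1) / (2 * specNorm A₀ * ebar + ebar ^ 2)) ^ 2) :
    ∀ i < r, |sval (hconcat fun j => A₀ + E j) i - Real.sqrt k * sval A₀ i| ≤ τ := by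
  intro i hir
  have hkpos : 0 < k := by omega
  have hrn : r ≤ n := hrank.trans (Matrix.rank_le_width A₀)
  have hin : i < n := lt_of_lt_of_le hir hrn
  have hiN : i < k*n := lt_of_lt_of_le hin (Nat.le_mul_of_pos_left n hkpos)
  have hr1n : r - 1 < n := by omega
  have hG : (A₀ᵀ*A₀).IsHermitian := herm_tmul A₀
  -- unfold svals
  rw [sval, dif_pos hr1n] at hkmax
  rw [sval, dif_pos hiN, sval, dif_pos hin]
  set δ0 := 2*specNorm A₀*ebar + ebar^2 with hδ0
  have hδ0pos : 0 < δ0 := by nlinarith [specNorm_nonneg A₀, hebar]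
  set g := eigDesc (A₀ᵀ*A₀) ⟨i,hin⟩ with hgdef
  set gr := eigDesc (A₀ᵀ*A₀) ⟨r-1,hr1n⟩ with hgrdef
  have hgr : 0 < gr := eigDesc_pos_of_rank A₀ hr hrank hr1n
  have hggr : gr ≤ g := eigDesc_anti hG (Fin.mk_le_mk.mpr (by omega))
  have hg0 : 0 < g := lt_of_lt_of_le hgr hggr
  have hEb : ∀ j, specNorm (E j) ≤ ebar := by
    intro j
    by_cases hj : j = (⟨0, by omega⟩ : Fin k)
    · rw [hj, hE0, specNorm_zero]; exact hebar.le
    · exact hub j (Finset.mem_erase.mpr ⟨hj, Finset.mem_univ _⟩)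
  have hE' : ∀ j (x : Fin n → ℝ), ‖toE ((E j) *ᵥ x)‖ ≤ ebar * ‖toE x‖ := fun j x =>
    (norm_mulVec_le _ _).trans (mul_le_mul_of_nonneg_right (hEb j) (norm_nonneg _))
  have hup := eig_up A₀ E hebar.le hE' hin hiN
  have hlow := eig_low hkpos A₀ E hebar.le hE' hin hiN
  rw [← hgdef, ← hδ0] at hup hlow
  set a := eigDesc ((hconcat fun j => A₀ + E j)ᵀ * (hconcat fun j => A₀ + E j)) ⟨i,hiN⟩
    with hadef
  have ha0 : 0 ≤ a := eigDesc_nonneg (psd_tmul _) _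
  have hkR : (0:ℝ) < (k:ℝ) := Nat.cast_pos.mpr hkpos
  have hb : |a - (k:ℝ)*g| ≤ (k:ℝ)*δ0 := abs_le.mpr ⟨by linarith, by linarith⟩
  have hbpos : 0 < (k:ℝ)*g := mul_pos hkR hg0
  have hsd := abs_sqrt_sub_sqrt ha0 hbpos hb
  rw [Real.sqrt_mul hkR.le] at hsd
  refine le_trans hsd ?_
  have hsg : Real.sqrt gr ≤ Real.sqrt g := Real.sqrt_le_sqrt hggr
  have hsgr : 0 < Real.sqrt gr := Real.sqrt_pos.mpr hgr
  have hsk : 0 < Real.sqrt k := Real.sqrt_pos.mpr hkR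
  have hdenom : Real.sqrt k * Real.sqrt gr ≤ Real.sqrt k * Real.sqrt g :=
    mul_le_mul_of_nonneg_left hsg hsk.le
  have h1 : (k:ℝ)*δ0 / (Real.sqrt k * Real.sqrt g)
      ≤ (k:ℝ)*δ0 / (Real.sqrt k * Real.sqrt gr) :=
    div_le_div_of_nonneg_left (mul_nonneg hkR.le hδ0pos.le) (mul_pos hsk hsgr) hdenom
  refine le_trans h1 ?_
  rw [div_le_iff₀ (mul_pos hsk hsgr)]
  have hskmax : Real.sqrt k ≤ τ * Real.sqrt gr / δ0 := by
    have h2 := Real.sqrt_le_sqrt hkmax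
    rwa [Real.sqrt_sq (div_nonneg (mul_nonneg hτ.le (Real.sqrt_nonneg _)) hδ0pos.le)] at h2
  have h3 : Real.sqrt k * δ0 ≤ τ * Real.sqrt gr := (le_div_iff₀ hδ0pos).mp hskmax
  have hkk : (k:ℝ) = Real.sqrt k * Real.sqrt k := (Real.mul_self_sqrt hkR.le).symm
  calc (k:ℝ)*δ0 = Real.sqrt k * (Real.sqrt k * δ0) := by
        rw [show Real.sqrt k * (Real.sqrt k * δ0) = (Real.sqrt k * Real.sqrt k) * δ0 from by
          ring, Real.mul_self_sqrt hkR.le]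
    _ ≤ Real.sqrt k * (τ * Real.sqrt gr) := mul_le_mul_of_nonneg_left h3 hsk.le
    _ = τ * (Real.sqrt k * Real.sqrt gr) := by ring
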